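/- Suppose the matrices satisfy the six deformed preprojective relations T₆S₆ − S₁T₁ = 1_{a₁}, T₁S₁ − S₂T₂ = ρ²·1_{a₂}, T₂S₂ − S₃T₃ = ρ·1_{a₃}, T₃S₃ − S₄T₄ = 1_{a₄}, T₄S₄ − S₅T₅ = ρ²·1_{a₅}, T₅S₅ − S₆T₆ = ρ·1_{a₆}. Then the diagonal blocks of V(σ₁) = B²A are, in order, 1·1_{a₁}, 0, ρ·1_{a₃}, 0, ρ²·1_{a₅}, 0, and the diagonal blocks of V(σ₂) = AB² are, in order, 0, −ρ²·1_{a₂}, 0, −1·1_{a₄}, 0, −ρ·1_{a₆}. -/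
import Mathlib


noncomputable section

open Matrix

/-- The primitive third root of unity `ρ = exp(2πi/3)`. -/
def ρ : ℂ := Complex.exp (2 * Real.pi * Complex.I / 3)

/-- The index set of the `6×6`-block matrices with block sizes `a 0, …, a 5`. -/
abbrev BIdx (a : Fin 6 → ℕ) := (i : Fin 6) × Fin (a i)

/-- The `n×n` matrix with the block `M` in block position `(i, j)` and zeroes elsewhere. -/
def emb {a : Fin 6 → ℕ} (i j : Fin 6) (M : Matrix (Fin (a i)) (Fin (a j)) ℂ) :
    Matrix (BIdx a) (BIdx a) ℂ := fun p q =>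
  if h : p.1 = i ∧ q.1 = j then
    M (Fin.cast (congrArg a h.1) p.2) (Fin.cast (congrArg a h.2) q.2)
  else 0

variable {a : Fin 6 → ℕ}

/-- The matrix `A`: diagonal blocks `(1, −1, 1, −1, 1, −1)` and off-diagonal blocks
`A₁₂ = iρS₁`, `A₁₆ = T₆`, `A₃₂ = T₂`, `A₃₄ = iρ²S₃`, `A₅₄ = T₄`, `A₅₆ = iS₅`. -/
def Amat (S₁ : Matrix (Fin (a 0)) (Fin (a 1)) ℂ) (S₃ : Matrix (Fin (a 2)) (Fin (a 3)) ℂ)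
    (S₅ : Matrix (Fin (a 4)) (Fin (a 5)) ℂ) (T₂ : Matrix (Fin (a 2)) (Fin (a 1)) ℂ)
    (T₄ : Matrix (Fin (a 4)) (Fin (a 3)) ℂ) (T₆ : Matrix (Fin (a 0)) (Fin (a 5)) ℂ) :
    Matrix (BIdx a) (BIdx a) ℂ :=
  emb 0 0 1 + emb 1 1 (-1) + emb 2 2 1 + emb 3 3 (-1) + emb 4 4 1 + emb 5 5 (-1) +
    emb 0 1 ((Complex.I * ρ) • S₁) + emb 0 5 T₆ + emb 2 1 T₂ +
    emb 2 3 ((Complex.I * ρ ^ 2) • S₃) + emb 4 3 T₄ + emb 4 5 (Complex.I • S₅)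

/-- The matrix `B`: diagonal blocks `(1, ρ, ρ², 1, ρ, ρ²)` and off-diagonal blocks
`B₂₁ = iT₁`, `B₂₃ = S₂`, `B₄₃ = iT₃`, `B₄₅ = ρS₄`, `B₆₁ = ρ²S₆`, `B₆₅ = iT₅`. -/
def Bmat (S₂ : Matrix (Fin (a 1)) (Fin (a 2)) ℂ) (S₄ : Matrix (Fin (a 3)) (Fin (a 4)) ℂ)
    (S₆ : Matrix (Fin (a 5)) (Fin (a 0)) ℂ) (T₁ : Matrix (Fin (a 1)) (Fin (a 0)) ℂ)
    (T₃ : Matrix (Fin (a 3)) (Fin (a 2)) ℂ) (T₅ : Matrix (Fin (a 5)) (Fin (a 4)) ℂ) :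
    Matrix (BIdx a) (BIdx a) ℂ :=
  emb 0 0 1 + emb 1 1 (ρ • 1) + emb 2 2 (ρ ^ 2 • 1) + emb 3 3 1 + emb 4 4 (ρ • 1) +
    emb 5 5 (ρ ^ 2 • 1) + emb 1 0 (Complex.I • T₁) + emb 1 2 S₂ +
    emb 3 2 (Complex.I • T₃) + emb 3 4 (ρ • S₄) + emb 5 0 (ρ ^ 2 • S₆) +
    emb 5 4 (Complex.I • T₅)

/-- The diagonal block of `V` at block position `i` is `c` times the identity. -/
def DiagBlockEq {a : Fin 6 → ℕ} (V : Matrix (BIdx a) (BIdx a) ℂ) (i : Fin 6) (c : ℂ) : Prop :=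
  ∀ x y : Fin (a i), V ⟨i, x⟩ ⟨i, y⟩ = if x = y then c else 0

lemma rho_cube : ρ ^ 3 = 1 := by
  rw [ρ, ← Complex.exp_nat_mul]
  have : (3 : ℂ) * (2 * Real.pi * Complex.I / 3) = 2 * Real.pi * Complex.I := by ring
  norm_num [this, Complex.exp_two_pi_mul_I]

lemma rho_ne_one : ρ ≠ 1 := by
  intro h
  rw [ρ, Complex.exp_eq_one_iff] at h
  obtain ⟨n, hn⟩ := h
  have hI : (2 * Real.pi * Complex.I : ℂ) ≠ 0 := by
    simp [Complex.I_ne_zero, Real.pi_ne_zero, Complex.ofReal_ne_zero]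
  have h4 : (1 : ℂ) * (2 * Real.pi * Complex.I) = ((n : ℂ) * 3) * (2 * Real.pi * Complex.I) := by
    linear_combination 3 * hn
  have h5 : (1 : ℂ) = (n : ℂ) * 3 := mul_right_cancel₀ hI h4
  have h6 : ((1 : ℤ) : ℂ) = ((n * 3 : ℤ) : ℂ) := by push_cast; exact h5
  have : (1 : ℤ) = n * 3 := by exact_mod_cast h6
  omega

lemma rho_quad : ρ ^ 2 + ρ + 1 = 0 := by
  have h : (ρ - 1) * (ρ ^ 2 + ρ + 1) = 0 := by linear_combination rho_cube
  rcases mul_eq_zero.mp h with h' | h'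
  · exact absurd (sub_eq_zero.mp h') rho_ne_one
  · exact h'

@[simp] lemma fin_cast_self {n : ℕ} (h : n = n) (x : Fin n) : Fin.cast h x = x := rfl

lemma emb_mul_emb (i j l : Fin 6) (M : Matrix (Fin (a i)) (Fin (a j)) ℂ)
    (N : Matrix (Fin (a j)) (Fin (a l)) ℂ) :
    emb (a := a) i j M * emb j l N = emb i l (M * N) := by
  ext ⟨p, x⟩ ⟨q, y⟩
  simp only [Matrix.mul_apply, emb]
  by_cases hp : p = i
  · by_cases hq : q = l
    · subst hp; subst hq
      simp only [and_true, true_and]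
      rw [← Finset.univ_sigma_univ, Finset.sum_sigma]
      rw [Finset.sum_eq_single j]
      · simp
      · intro k _ hk
        apply Finset.sum_eq_zero
        intro z _
        simp [hk]
      · simp
    · simp only [hq, and_false, dite_false]
      apply Finset.sum_eq_zero; intro r _; simp [hq]
  · simp only [hp, false_and, dite_false]
    apply Finset.sum_eq_zero; intro r _; simp [hp]

lemma emb_mul_emb_ne (i j k l : Fin 6) (h : j ≠ k) (M : Matrix (Fin (a i)) (Fin (a j)) ℂ)
    (N : Matrix (Fin (a k)) (Fin (a l)) ℂ) :
    emb (a := a) i j M * emb k l N = 0 := by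
  ext ⟨p, x⟩ ⟨q, y⟩
  simp only [Matrix.mul_apply, emb, Matrix.zero_apply]
  apply Finset.sum_eq_zero
  intro r _
  by_cases h1 : r.1 = j
  · have h2 : ¬ (r.1 = k) := by rw [h1]; exact h
    simp [h2]
  · simp [h1]

lemma emb_apply (i j : Fin 6) (M : Matrix (Fin (a i)) (Fin (a j)) ℂ) (p q : BIdx a) :
    emb i j M p q =
      if h : p.1 = i ∧ q.1 = j then
        M (Fin.cast (congrArg a h.1) p.2) (Fin.cast (congrArg a h.2) q.2)
      else 0 := rfl

set_option maxHeartbeats 2000000 in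
/-- If the deformed preprojective relations `T₆S₆ − S₁T₁ = 1`, `T₁S₁ − S₂T₂ = ρ²·1`,
`T₂S₂ − S₃T₃ = ρ·1`, `T₃S₃ − S₄T₄ = 1`, `T₄S₄ − S₅T₅ = ρ²·1`, `T₅S₅ − S₆T₆ = ρ·1`
hold, then the diagonal blocks of `V(σ₁) = B²A` are, in order, `1·1, 0, ρ·1, 0, ρ²·1, 0`
and those of `V(σ₂) = AB²` are, in order, `0, −ρ²·1, 0, −1·1, 0, −ρ·1`. -/
theorem diag_blocks_deformed_preprojective (a : Fin 6 → ℕ)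
    (S₁ : Matrix (Fin (a 0)) (Fin (a 1)) ℂ) (S₂ : Matrix (Fin (a 1)) (Fin (a 2)) ℂ)
    (S₃ : Matrix (Fin (a 2)) (Fin (a 3)) ℂ) (S₄ : Matrix (Fin (a 3)) (Fin (a 4)) ℂ)
    (S₅ : Matrix (Fin (a 4)) (Fin (a 5)) ℂ) (S₆ : Matrix (Fin (a 5)) (Fin (a 0)) ℂ)
    (T₁ : Matrix (Fin (a 1)) (Fin (a 0)) ℂ) (T₂ : Matrix (Fin (a 2)) (Fin (a 1)) ℂ)
    (T₃ : Matrix (Fin (a 3)) (Fin (a 2)) ℂ) (T₄ : Matrix (Fin (a 4)) (Fin (a 3)) ℂ)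
    (T₅ : Matrix (Fin (a 5)) (Fin (a 4)) ℂ) (T₆ : Matrix (Fin (a 0)) (Fin (a 5)) ℂ)
    (h₁ : T₆ * S₆ - S₁ * T₁ = 1) (h₂ : T₁ * S₁ - S₂ * T₂ = ρ ^ 2 • 1)
    (h₃ : T₂ * S₂ - S₃ * T₃ = ρ • 1) (h₄ : T₃ * S₃ - S₄ * T₄ = 1)
    (h₅ : T₄ * S₄ - S₅ * T₅ = ρ ^ 2 • 1) (h₆ : T₅ * S₅ - S₆ * T₆ = ρ • 1) :
    (DiagBlockEq (Bmat S₂ S₄ S₆ T₁ T₃ T₅ ^ 2 * Amat S₁ S₃ S₅ T₂ T₄ T₆) 0 1 ∧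
     DiagBlockEq (Bmat S₂ S₄ S₆ T₁ T₃ T₅ ^ 2 * Amat S₁ S₃ S₅ T₂ T₄ T₆) 1 0 ∧
     DiagBlockEq (Bmat S₂ S₄ S₆ T₁ T₃ T₅ ^ 2 * Amat S₁ S₃ S₅ T₂ T₄ T₆) 2 ρ ∧
     DiagBlockEq (Bmat S₂ S₄ S₆ T₁ T₃ T₅ ^ 2 * Amat S₁ S₃ S₅ T₂ T₄ T₆) 3 0 ∧
     DiagBlockEq (Bmat S₂ S₄ S₆ T₁ T₃ T₅ ^ 2 * Amat S₁ S₃ S₅ T₂ T₄ T₆) 4 (ρ ^ 2) ∧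
     DiagBlockEq (Bmat S₂ S₄ S₆ T₁ T₃ T₅ ^ 2 * Amat S₁ S₃ S₅ T₂ T₄ T₆) 5 0) ∧
    (DiagBlockEq (Amat S₁ S₃ S₅ T₂ T₄ T₆ * Bmat S₂ S₄ S₆ T₁ T₃ T₅ ^ 2) 0 0 ∧
     DiagBlockEq (Amat S₁ S₃ S₅ T₂ T₄ T₆ * Bmat S₂ S₄ S₆ T₁ T₃ T₅ ^ 2) 1 (-ρ ^ 2) ∧
     DiagBlockEq (Amat S₁ S₃ S₅ T₂ T₄ T₆ * Bmat S₂ S₄ S₆ T₁ T₃ T₅ ^ 2) 2 0 ∧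
     DiagBlockEq (Amat S₁ S₃ S₅ T₂ T₄ T₆ * Bmat S₂ S₄ S₆ T₁ T₃ T₅ ^ 2) 3 (-1) ∧
     DiagBlockEq (Amat S₁ S₃ S₅ T₂ T₄ T₆ * Bmat S₂ S₄ S₆ T₁ T₃ T₅ ^ 2) 4 0 ∧
     DiagBlockEq (Amat S₁ S₃ S₅ T₂ T₄ T₆ * Bmat S₂ S₄ S₆ T₁ T₃ T₅ ^ 2) 5 (-ρ)) := by
  have hq := rho_quad
  have hc := rho_cube
  have hI := Complex.I_sq
  refine ⟨⟨?_, ?_, ?_, ?_, ?_, ?_⟩, ?_, ?_, ?_, ?_, ?_, ?_⟩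
  · intro x y
    rw [pow_two, Bmat, Amat]
    simp only [mul_add, add_mul, emb_mul_emb, emb_mul_emb_ne, ne_eq, Fin.reduceEq,
      not_false_eq_true, Matrix.smul_mul, Matrix.mul_smul, smul_smul, Matrix.one_mul,
      Matrix.mul_one, Matrix.mul_neg, Matrix.neg_mul, smul_neg, neg_smul,
      zero_mul, mul_zero, zero_add, add_zero, smul_zero]
    simp only [Matrix.add_apply, emb_apply, Fin.reduceEq, and_false, false_and, and_self,
      dite_true, dite_false, fin_cast_self, Matrix.smul_apply, Matrix.neg_apply,
      Matrix.one_apply, smul_eq_mul, add_zero, zero_add, mul_ite, mul_one, mul_zero]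
  · -- uses h₂
    intro x y
    rw [pow_two, Bmat, Amat]
    simp only [mul_add, add_mul, emb_mul_emb, emb_mul_emb_ne, ne_eq, Fin.reduceEq,
      not_false_eq_true, Matrix.smul_mul, Matrix.mul_smul, smul_smul, Matrix.one_mul,
      Matrix.mul_one, Matrix.mul_neg, Matrix.neg_mul, smul_neg, neg_smul,
      zero_mul, mul_zero, zero_add, add_zero, smul_zero]
    simp only [Matrix.add_apply, emb_apply, Fin.reduceEq, and_false, false_and, and_self,
      dite_true, dite_false, fin_cast_self, Matrix.smul_apply, Matrix.neg_apply,
      Matrix.one_apply, smul_eq_mul, add_zero, zero_add, mul_ite, mul_one, mul_zero]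
    have e := congrFun (congrFun h₂ x) y
    simp only [Matrix.sub_apply, Matrix.smul_apply, Matrix.one_apply, smul_eq_mul] at e
    by_cases hxy : x = y
    · simp only [if_pos hxy, mul_one] at e ⊢
      linear_combination (ρ * (T₁ * S₁) x y + ρ ^ 2 * (T₁ * S₁) x y) * Complex.I_sq + (-(ρ + ρ ^ 2)) * e + (-ρ ^ 2) * rho_quad
    · simp only [if_neg hxy, mul_zero] at e ⊢
      linear_combination (ρ * (T₁ * S₁) x y + ρ ^ 2 * (T₁ * S₁) x y) * Complex.I_sq + (-(ρ + ρ ^ 2)) * e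
  · intro x y
    rw [pow_two, Bmat, Amat]
    simp only [mul_add, add_mul, emb_mul_emb, emb_mul_emb_ne, ne_eq, Fin.reduceEq,
      not_false_eq_true, Matrix.smul_mul, Matrix.mul_smul, smul_smul, Matrix.one_mul,
      Matrix.mul_one, Matrix.mul_neg, Matrix.neg_mul, smul_neg, neg_smul,
      zero_mul, mul_zero, zero_add, add_zero, smul_zero]
    simp only [Matrix.add_apply, emb_apply, Fin.reduceEq, and_false, false_and, and_self,
      dite_true, dite_false, fin_cast_self, Matrix.smul_apply, Matrix.neg_apply,
      Matrix.one_apply, smul_eq_mul, add_zero, zero_add, mul_ite, mul_one, mul_zero]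
    split_ifs
    · linear_combination (ρ : ℂ) * rho_cube
    · ring
  · -- uses h₄
    intro x y
    rw [pow_two, Bmat, Amat]
    simp only [mul_add, add_mul, emb_mul_emb, emb_mul_emb_ne, ne_eq, Fin.reduceEq,
      not_false_eq_true, Matrix.smul_mul, Matrix.mul_smul, smul_smul, Matrix.one_mul,
      Matrix.mul_one, Matrix.mul_neg, Matrix.neg_mul, smul_neg, neg_smul,
      zero_mul, mul_zero, zero_add, add_zero, smul_zero]
    simp only [Matrix.add_apply, emb_apply, Fin.reduceEq, and_false, false_and, and_self,
      dite_true, dite_false, fin_cast_self, Matrix.smul_apply, Matrix.neg_apply,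
      Matrix.one_apply, smul_eq_mul, add_zero, zero_add, mul_ite, mul_one, mul_zero]
    have e := congrFun (congrFun h₄ x) y
    simp only [Matrix.sub_apply, Matrix.one_apply] at e
    by_cases hxy : x = y
    · simp only [if_pos hxy] at e ⊢
      linear_combination (ρ ^ 4 * (T₃ * S₃) x y + ρ ^ 2 * (T₃ * S₃) x y) * Complex.I_sq + (-(ρ ^ 2 + ρ)) * e + (-1 : ℂ) * rho_quad + (-ρ * (T₃ * S₃) x y) * rho_cube
    · simp only [if_neg hxy] at e ⊢
      linear_combination (ρ ^ 4 * (T₃ * S₃) x y + ρ ^ 2 * (T₃ * S₃) x y) * Complex.I_sq + (-(ρ ^ 2 + ρ)) * e + (-ρ * (T₃ * S₃) x y) * rho_cube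
  · intro x y
    rw [pow_two, Bmat, Amat]
    simp only [mul_add, add_mul, emb_mul_emb, emb_mul_emb_ne, ne_eq, Fin.reduceEq,
      not_false_eq_true, Matrix.smul_mul, Matrix.mul_smul, smul_smul, Matrix.one_mul,
      Matrix.mul_one, Matrix.mul_neg, Matrix.neg_mul, smul_neg, neg_smul,
      zero_mul, mul_zero, zero_add, add_zero, smul_zero]
    simp only [Matrix.add_apply, emb_apply, Fin.reduceEq, and_false, false_and, and_self,
      dite_true, dite_false, fin_cast_self, Matrix.smul_apply, Matrix.neg_apply,
      Matrix.one_apply, smul_eq_mul, add_zero, zero_add, mul_ite, mul_one, mul_zero]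
    split_ifs <;> linear_combination (0 : ℂ) * rho_cube
  · -- uses h₆
    intro x y
    rw [pow_two, Bmat, Amat]
    simp only [mul_add, add_mul, emb_mul_emb, emb_mul_emb_ne, ne_eq, Fin.reduceEq,
      not_false_eq_true, Matrix.smul_mul, Matrix.mul_smul, smul_smul, Matrix.one_mul,
      Matrix.mul_one, Matrix.mul_neg, Matrix.neg_mul, smul_neg, neg_smul,
      zero_mul, mul_zero, zero_add, add_zero, smul_zero]
    simp only [Matrix.add_apply, emb_apply, Fin.reduceEq, and_false, false_and, and_self,
      dite_true, dite_false, fin_cast_self, Matrix.smul_apply, Matrix.neg_apply,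
      Matrix.one_apply, smul_eq_mul, add_zero, zero_add, mul_ite, mul_one, mul_zero]
    have e := congrFun (congrFun h₆ x) y
    simp only [Matrix.sub_apply, Matrix.smul_apply, Matrix.one_apply, smul_eq_mul] at e
    by_cases hxy : x = y
    · simp only [if_pos hxy, mul_one] at e ⊢
      linear_combination (ρ * (T₅ * S₅) x y + ρ ^ 2 * (T₅ * S₅) x y) * Complex.I_sq + (-(ρ + ρ ^ 2)) * e + (-ρ ^ 2) * rho_quad + (ρ * (S₆ * T₆) x y) * rho_cube
    · simp only [if_neg hxy, mul_zero] at e ⊢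
      linear_combination (ρ * (T₅ * S₅) x y + ρ ^ 2 * (T₅ * S₅) x y) * Complex.I_sq + (-(ρ + ρ ^ 2)) * e + (ρ * (S₆ * T₆) x y) * rho_cube
  · -- uses h₁
    intro x y
    rw [pow_two, Bmat, Amat]
    simp only [mul_add, add_mul, emb_mul_emb, emb_mul_emb_ne, ne_eq, Fin.reduceEq,
      not_false_eq_true, Matrix.smul_mul, Matrix.mul_smul, smul_smul, Matrix.one_mul,
      Matrix.mul_one, Matrix.mul_neg, Matrix.neg_mul, smul_neg, neg_smul,
      zero_mul, mul_zero, zero_add, add_zero, smul_zero]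
    simp only [Matrix.add_apply, emb_apply, Fin.reduceEq, and_false, false_and, and_self,
      dite_true, dite_false, fin_cast_self, Matrix.smul_apply, Matrix.neg_apply,
      Matrix.one_apply, smul_eq_mul, add_zero, zero_add, mul_ite, mul_one, mul_zero]
    have e := congrFun (congrFun h₁ x) y
    simp only [Matrix.sub_apply, Matrix.one_apply] at e
    by_cases hxy : x = y
    · simp only [if_pos hxy] at e ⊢
      linear_combination (ρ * (S₁ * T₁) x y + ρ ^ 2 * (S₁ * T₁) x y) * Complex.I_sq + (ρ + ρ ^ 2) * e + rho_quad + (ρ * (T₆ * S₆) x y) * rho_cube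
    · simp only [if_neg hxy] at e ⊢
      linear_combination (ρ * (S₁ * T₁) x y + ρ ^ 2 * (S₁ * T₁) x y) * Complex.I_sq + (ρ + ρ ^ 2) * e + (ρ * (T₆ * S₆) x y) * rho_cube
  · intro x y
    rw [pow_two, Bmat, Amat]
    simp only [mul_add, add_mul, emb_mul_emb, emb_mul_emb_ne, ne_eq, Fin.reduceEq,
      not_false_eq_true, Matrix.smul_mul, Matrix.mul_smul, smul_smul, Matrix.one_mul,
      Matrix.mul_one, Matrix.mul_neg, Matrix.neg_mul, smul_neg, neg_smul,
      zero_mul, mul_zero, zero_add, add_zero, smul_zero]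
    simp only [Matrix.add_apply, emb_apply, Fin.reduceEq, and_false, false_and, and_self,
      dite_true, dite_false, fin_cast_self, Matrix.smul_apply, Matrix.neg_apply,
      Matrix.one_apply, smul_eq_mul, add_zero, zero_add, mul_ite, mul_one, mul_zero]
    split_ifs <;> linear_combination (0 : ℂ) * rho_cube
  · -- uses h₃
    intro x y
    rw [pow_two, Bmat, Amat]
    simp only [mul_add, add_mul, emb_mul_emb, emb_mul_emb_ne, ne_eq, Fin.reduceEq,
      not_false_eq_true, Matrix.smul_mul, Matrix.mul_smul, smul_smul, Matrix.one_mul,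
      Matrix.mul_one, Matrix.mul_neg, Matrix.neg_mul, smul_neg, neg_smul,
      zero_mul, mul_zero, zero_add, add_zero, smul_zero]
    simp only [Matrix.add_apply, emb_apply, Fin.reduceEq, and_false, false_and, and_self,
      dite_true, dite_false, fin_cast_self, Matrix.smul_apply, Matrix.neg_apply,
      Matrix.one_apply, smul_eq_mul, add_zero, zero_add, mul_ite, mul_one, mul_zero]
    have e := congrFun (congrFun h₃ x) y
    simp only [Matrix.sub_apply, Matrix.smul_apply, Matrix.one_apply, smul_eq_mul] at e
    by_cases hxy : x = y
    · simp only [if_pos hxy, mul_one] at e ⊢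
      linear_combination (ρ ^ 4 * (S₃ * T₃) x y + ρ ^ 2 * (S₃ * T₃) x y) * Complex.I_sq + (ρ ^ 2 + ρ) * e + ρ ^ 2 * rho_quad + (-ρ * (S₃ * T₃) x y) * rho_cube
    · simp only [if_neg hxy, mul_zero] at e ⊢
      linear_combination (ρ ^ 4 * (S₃ * T₃) x y + ρ ^ 2 * (S₃ * T₃) x y) * Complex.I_sq + (ρ ^ 2 + ρ) * e + (-ρ * (S₃ * T₃) x y) * rho_cube
  · intro x y
    rw [pow_two, Bmat, Amat]
    simp only [mul_add, add_mul, emb_mul_emb, emb_mul_emb_ne, ne_eq, Fin.reduceEq,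
      not_false_eq_true, Matrix.smul_mul, Matrix.mul_smul, smul_smul, Matrix.one_mul,
      Matrix.mul_one, Matrix.mul_neg, Matrix.neg_mul, smul_neg, neg_smul,
      zero_mul, mul_zero, zero_add, add_zero, smul_zero]
    simp only [Matrix.add_apply, emb_apply, Fin.reduceEq, and_false, false_and, and_self,
      dite_true, dite_false, fin_cast_self, Matrix.smul_apply, Matrix.neg_apply,
      Matrix.one_apply, smul_eq_mul, add_zero, zero_add, mul_ite, mul_one, mul_zero]
    split_ifs <;> linear_combination (0 : ℂ) * rho_cube
  · -- uses h₅
    intro x y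
    rw [pow_two, Bmat, Amat]
    simp only [mul_add, add_mul, emb_mul_emb, emb_mul_emb_ne, ne_eq, Fin.reduceEq,
      not_false_eq_true, Matrix.smul_mul, Matrix.mul_smul, smul_smul, Matrix.one_mul,
      Matrix.mul_one, Matrix.mul_neg, Matrix.neg_mul, smul_neg, neg_smul,
      zero_mul, mul_zero, zero_add, add_zero, smul_zero]
    simp only [Matrix.add_apply, emb_apply, Fin.reduceEq, and_false, false_and, and_self,
      dite_true, dite_false, fin_cast_self, Matrix.smul_apply, Matrix.neg_apply,
      Matrix.one_apply, smul_eq_mul, add_zero, zero_add, mul_ite, mul_one, mul_zero]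
    have e := congrFun (congrFun h₅ x) y
    simp only [Matrix.sub_apply, Matrix.smul_apply, Matrix.one_apply, smul_eq_mul] at e
    by_cases hxy : x = y
    · simp only [if_pos hxy, mul_one] at e ⊢
      linear_combination (ρ * (S₅ * T₅) x y + ρ ^ 2 * (S₅ * T₅) x y) * Complex.I_sq + (ρ ^ 2 + ρ) * e + rho_quad + (ρ + 1) * rho_cube
    · simp only [if_neg hxy, mul_zero] at e ⊢
      linear_combination (ρ * (S₅ * T₅) x y + ρ ^ 2 * (S₅ * T₅) x y) * Complex.I_sq + (ρ ^ 2 + ρ) * e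
  · intro x y
    rw [pow_two, Bmat, Amat]
    simp only [mul_add, add_mul, emb_mul_emb, emb_mul_emb_ne, ne_eq, Fin.reduceEq,
      not_false_eq_true, Matrix.smul_mul, Matrix.mul_smul, smul_smul, Matrix.one_mul,
      Matrix.mul_one, Matrix.mul_neg, Matrix.neg_mul, smul_neg, neg_smul,
      zero_mul, mul_zero, zero_add, add_zero, smul_zero]
    simp only [Matrix.add_apply, emb_apply, Fin.reduceEq, and_false, false_and, and_self,
      dite_true, dite_false, fin_cast_self, Matrix.smul_apply, Matrix.neg_apply,
      Matrix.one_apply, smul_eq_mul, add_zero, zero_add, mul_ite, mul_one, mul_zero]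
    split_ifs
    · linear_combination (-ρ : ℂ) * rho_cube
    · ring
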